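/- Let L be a prefix-free language recognized by a DFA A with state set Q, let w = a₁⋯aₘ be a word, and let S be a set of subintervals of [1,m] that is overlapping (all intervals share a common point) and increasing (intervals with the same right endpoint are equal). If for every [i,j] ∈ S the factor w[i,j] belongs to L, then |S| ≤ |Q|. -/
import Mathlib


/-- If `L` is a prefix-free language recognized by a DFA with state set `σ`,
`w` a word of length `m`, and `S` an overlapping increasing set of subintervals
of `[1,m]` all of whose factors of `w` lie in `L`, then `|S| ≤ |σ|`. -/
theorem overlap_lemma {α σ : Type*} [Fintype σ] (A : DFA α σ)
    (hpf : ∀ x ∈ A.accepts, ∀ y ∈ A.accepts, x <+: y → x = y)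
    (m : ℕ) (w : List α) (hw : w.length = m)
    (S : Finset (ℕ × ℕ))
    (hsub : ∀ p ∈ S, 1 ≤ p.1 ∧ p.1 ≤ p.2 ∧ p.2 ≤ m)
    (hover : ∃ ℓ, ∀ p ∈ S, p.1 ≤ ℓ ∧ ℓ ≤ p.2)
    (hinc : ∀ p ∈ S, ∀ q ∈ S, p.2 = q.2 → p.1 = q.1)
    (hmem : ∀ p ∈ S, ((w.drop (p.1 - 1)).take (p.2 - p.1 + 1)) ∈ A.accepts) :
    S.card ≤ Fintype.card σ := by
  classical
  obtain ⟨ℓ, hℓ⟩ := hover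
  -- splitting a factor at position ℓ
  have split : ∀ i j : ℕ, 1 ≤ i → i ≤ ℓ → ℓ ≤ j →
      (w.drop (i-1)).take (j - i + 1) =
      (w.drop (i-1)).take (ℓ - i + 1) ++ (w.drop ℓ).take (j - ℓ) := by
    intro i j h1 h2 h3
    have hj : j - i + 1 = (ℓ - i + 1) + (j - ℓ) := by omega
    have hd : (w.drop (i-1)).drop (ℓ-i+1) = w.drop ℓ := by
      rw [List.drop_drop]; congr 1; omega
    rw [hj, List.take_add, hd]
  have key : ∀ p ∈ S, ∀ q ∈ S, p.2 ≤ q.2 →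
      A.eval ((w.drop (p.1 - 1)).take (ℓ - p.1 + 1)) =
      A.eval ((w.drop (q.1 - 1)).take (ℓ - q.1 + 1)) → p.2 = q.2 := by
    intro p hp q hq hle heq
    obtain ⟨hp1, hp2, hp3⟩ := hsub p hp
    obtain ⟨hq1, hq2, hq3⟩ := hsub q hq
    obtain ⟨hpl, hlp⟩ := hℓ p hp
    obtain ⟨hql, hlq⟩ := hℓ q hq
    set u := (w.drop (q.1 - 1)).take (p.2 - q.1 + 1) with hu
    have hsplit_u : u = (w.drop (q.1-1)).take (ℓ - q.1 + 1) ++ (w.drop ℓ).take (p.2 - ℓ) :=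
      split q.1 p.2 hq1 hql hlp
    have hsplit_p : (w.drop (p.1-1)).take (p.2 - p.1 + 1) =
        (w.drop (p.1-1)).take (ℓ - p.1 + 1) ++ (w.drop ℓ).take (p.2 - ℓ) :=
      split p.1 p.2 hp1 hpl hlp
    have hsplit_q : (w.drop (q.1-1)).take (q.2 - q.1 + 1) =
        (w.drop (q.1-1)).take (ℓ - q.1 + 1) ++ (w.drop ℓ).take (q.2 - ℓ) :=
      split q.1 q.2 hq1 hql hlq
    -- u is accepted
    have hu_acc : u ∈ A.accepts := by
      have : A.eval u = A.eval ((w.drop (p.1-1)).take (p.2 - p.1 + 1)) := by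
        rw [hsplit_u, hsplit_p]
        simp only [DFA.eval] at heq
        simp only [DFA.eval, DFA.evalFrom_of_append]
        rw [← heq]
      have hmp := hmem p hp
      rw [DFA.mem_accepts] at hmp ⊢
      rw [this]; exact hmp
    -- u is a prefix of the q-factor
    have hpre : u <+: (w.drop (q.1 - 1)).take (q.2 - q.1 + 1) := by
      rw [hsplit_u, hsplit_q]
      have htt : (w.drop ℓ).take (p.2 - ℓ) <+: (w.drop ℓ).take (q.2 - ℓ) := by
        have : (w.drop ℓ).take (p.2 - ℓ) = ((w.drop ℓ).take (q.2 - ℓ)).take (p.2 - ℓ) := by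
          rw [List.take_take, min_eq_left (by omega)]
        rw [this]; exact List.take_prefix _ _
      obtain ⟨r, hr⟩ := htt
      exact ⟨r, by rw [List.append_assoc, hr]⟩
    have hequ := hpf u hu_acc _ (hmem q hq) hpre
    have l1 : u.length = p.2 - q.1 + 1 := by
      rw [hu]; simp only [List.length_take, List.length_drop, hw]; omega
    have l2 : ((w.drop (q.1 - 1)).take (q.2 - q.1 + 1)).length = q.2 - q.1 + 1 := by
      simp only [List.length_take, List.length_drop, hw]; omega
    rw [hequ] at l1
    omega
  have hinj : Set.InjOn (fun p : ℕ × ℕ => A.eval ((w.drop (p.1 - 1)).take (ℓ - p.1 + 1))) S := by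
    intro p hp q hq heq
    simp only at heq
    have h2 : p.2 = q.2 := by
      rcases le_total p.2 q.2 with h | h
      · exact key p hp q hq h heq
      · exact (key q hq p hp h heq.symm).symm
    have h1 : p.1 = q.1 := hinc p hp q hq h2
    exact Prod.ext h1 h2
  calc S.card = (S.image (fun p : ℕ × ℕ => A.eval ((w.drop (p.1 - 1)).take (ℓ - p.1 + 1)))).card :=
        (Finset.card_image_of_injOn hinj).symm
    _ ≤ Fintype.card σ := Finset.card_le_univ _
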